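/- Suppose f_d is a Routh force with Routh potential β. Then for all q0, q1 ∈ E: (1) D₁f⁺(q0,q1)(u0)(u1) = D₂f⁻(q0,q1)(u1)(u0) for all u0, u1 ∈ E, where D₁f⁺(q0,q1)(u0) denotes the derivative at q0 in direction u0 of x ↦ f⁺(x,q1) and D₂f⁻(q0,q1)(u1) the derivative at q1 in direction u1 of y ↦ f⁻(q0,y); (2) the Routh potential is determined by the force: for every q, u, v ∈ E and every choice of the opposite argument, β(q)(u,v) = D₁f⁻(q,q1)(u)(v) − D₁f⁻(q,q1)(v)(u) for all q1 ∈ E, and β(q)(u,v) = −D₂f⁺(q0,q)(u)(v) + D₂f⁺(q0,q)(v)(u) for all q0 ∈ E. -/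

import Mathlib

open ContinuousLinearMap

variable {E : Type*} [NormedAddCommGroup E] [NormedSpace ℝ E] [FiniteDimensional ℝ E]

/-- Partial Fréchet derivative in the first variable. -/
noncomputable def D1 (L : E × E → ℝ) (x : E × E) : E →L[ℝ] ℝ :=
  fderiv ℝ (fun a => L (a, x.2)) x.1

/-- Partial Fréchet derivative in the second variable. -/
noncomputable def D2 (L : E × E → ℝ) (x : E × E) : E →L[ℝ] ℝ :=
  fderiv ℝ (fun b => L (x.1, b)) x.2

/-- The force 1-form `f_d` on `E × E`. -/
noncomputable def fd (fm fp : E × E → (E →L[ℝ] ℝ)) (x : E × E) : (E × E) →L[ℝ] ℝ :=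
  (fm x).comp (ContinuousLinearMap.fst ℝ E E) + (fp x).comp (ContinuousLinearMap.snd ℝ E E)

/-- The 1-form `θ⁺` on `E × E`. -/
noncomputable def thetaP (Ld : E × E → ℝ) (fp : E × E → (E →L[ℝ] ℝ)) (x : E × E) :
    (E × E) →L[ℝ] ℝ := (D2 Ld x + fp x).comp (ContinuousLinearMap.snd ℝ E E)

/-- The 1-form `θ⁻` on `E × E`. -/
noncomputable def thetaM (Ld : E × E → ℝ) (fm : E × E → (E →L[ℝ] ℝ)) (x : E × E) :
    (E × E) →L[ℝ] ℝ := -((D1 Ld x + fm x).comp (ContinuousLinearMap.fst ℝ E E))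

/-- The exterior derivative of a 1-form `α` on `E × E`, as a function of two vectors. -/
noncomputable def extd (α : E × E → ((E × E) →L[ℝ] ℝ)) (x : E × E) (U V : E × E) : ℝ :=
  fderiv ℝ α x U V - fderiv ℝ α x V U

/-- The 2-form `ω⁺ := -dθ⁺` on `E × E`. -/
noncomputable def omegaP (Ld : E × E → ℝ) (fp : E × E → (E →L[ℝ] ℝ)) (x : E × E)
    (U V : E × E) : ℝ := -extd (thetaP Ld fp) x U V

/-- The 2-form `ω⁻ := -dθ⁻` on `E × E`. -/
noncomputable def omegaM (Ld : E × E → ℝ) (fm : E × E → (E →L[ℝ] ℝ)) (x : E × E)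
    (U V : E × E) : ℝ := -extd (thetaM Ld fm) x U V

/-- The forced discrete Legendre transform `FL⁺`. -/
noncomputable def FLp (Ld : E × E → ℝ) (fp : E × E → (E →L[ℝ] ℝ)) (x : E × E) :
    E × (E →L[ℝ] ℝ) := (x.2, D2 Ld x + fp x)

/-- The forced discrete Legendre transform `FL⁻`. -/
noncomputable def FLm (Ld : E × E → ℝ) (fm : E × E → (E →L[ℝ] ℝ)) (x : E × E) :
    E × (E →L[ℝ] ℝ) := (x.1, -D1 Ld x - fm x)

lemma partial1_eq {F : Type*} [NormedAddCommGroup F] [NormedSpace ℝ F]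
    (f : E × E → F) (x y : E) (hf : DifferentiableAt ℝ f (x, y)) (u : E) :
    fderiv ℝ (fun a => f (a, y)) x u = fderiv ℝ f (x, y) (u, 0) := by
  have h : HasFDerivAt (fun a => f (a, y))
      ((fderiv ℝ f (x, y)).comp (ContinuousLinearMap.inl ℝ E E)) x :=
    hf.hasFDerivAt.comp x (hasFDerivAt_prodMk_left x y)
  rw [h.fderiv]; rfl

lemma partial2_eq {F : Type*} [NormedAddCommGroup F] [NormedSpace ℝ F]
    (f : E × E → F) (x y : E) (hf : DifferentiableAt ℝ f (x, y)) (u : E) :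
    fderiv ℝ (fun b => f (x, b)) y u = fderiv ℝ f (x, y) (0, u) := by
  have h : HasFDerivAt (fun b => f (x, b))
      ((fderiv ℝ f (x, y)).comp (ContinuousLinearMap.inr ℝ E E)) y :=
    hf.hasFDerivAt.comp y (hasFDerivAt_prodMk_right x y)
  rw [h.fderiv]; rfl

lemma fd_fderiv_eval (fm fp : E × E → (E →L[ℝ] ℝ))
    (hfm : ContDiff ℝ 1 fm) (hfp : ContDiff ℝ 1 fp) (p U V : E × E) :
    fderiv ℝ (fd fm fp) p U V
      = fderiv ℝ fm p U V.1 + fderiv ℝ fp p U V.2 := by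
  have hA : HasFDerivAt (fd fm fp)
      ((((ContinuousLinearMap.compL ℝ (E × E) E ℝ).flip
          (ContinuousLinearMap.fst ℝ E E)).comp (fderiv ℝ fm p))
        + (((ContinuousLinearMap.compL ℝ (E × E) E ℝ).flip
          (ContinuousLinearMap.snd ℝ E E)).comp (fderiv ℝ fp p))) p := by
    have h1 := (((ContinuousLinearMap.compL ℝ (E × E) E ℝ).flip
        (ContinuousLinearMap.fst ℝ E E)).hasFDerivAt
          (x := fm p)).comp p (hfm.differentiable one_ne_zero p).hasFDerivAt
    have h2 := (((ContinuousLinearMap.compL ℝ (E × E) E ℝ).flip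
        (ContinuousLinearMap.snd ℝ E E)).hasFDerivAt
          (x := fp p)).comp p (hfp.differentiable one_ne_zero p).hasFDerivAt
    exact h1.add h2
  rw [hA.fderiv]
  rfl

lemma extd_fd_eval (fm fp : E × E → (E →L[ℝ] ℝ))
    (hfm : ContDiff ℝ 1 fm) (hfp : ContDiff ℝ 1 fp) (p U V : E × E) :
    extd (fd fm fp) p U V
      = fderiv ℝ fm p U V.1 + fderiv ℝ fp p U V.2
        - (fderiv ℝ fm p V U.1 + fderiv ℝ fp p V U.2) := by
  unfold extd
  rw [fd_fderiv_eval fm fp hfm hfp, fd_fderiv_eval fm fp hfm hfp]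

/-- **Properties of a Routh force and determination of its Routh potential.** -/
theorem routh_force_properties
    (fm fp : E × E → (E →L[ℝ] ℝ))
    (hfm : ContDiff ℝ 1 fm) (hfp : ContDiff ℝ 1 fp)
    (β : E → (E →L[ℝ] E →L[ℝ] ℝ))
    (hβalt : ∀ (q : E) (u v : E), β q u v = -β q v u)
    (hRouth : ∀ (q0 q1 u0 u1 v0 v1 : E),
      -extd (fd fm fp) (q0, q1) (u0, u1) (v0, v1) = β q1 u1 v1 - β q0 u0 v0) :
    -- (1) mixed partial derivatives of the force components agree
    (∀ (q0 q1 u0 u1 : E),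
        fderiv ℝ (fun a : E => fp (a, q1)) q0 u0 u1
          = fderiv ℝ (fun b : E => fm (q0, b)) q1 u1 u0)
    -- (2) the Routh potential is determined by the force
    ∧ (∀ (q u v : E) (q1 : E),
        β q u v = fderiv ℝ (fun a : E => fm (a, q1)) q u v
          - fderiv ℝ (fun a : E => fm (a, q1)) q v u)
    ∧ (∀ (q u v : E) (q0 : E),
        β q u v = -(fderiv ℝ (fun b : E => fp (q0, b)) q u v)
          + fderiv ℝ (fun b : E => fp (q0, b)) q v u) := by
  have hdm : ∀ p : E × E, DifferentiableAt ℝ fm p := fun p => hfm.differentiable one_ne_zero p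
  have hdp : ∀ p : E × E, DifferentiableAt ℝ fp p := fun p => hfp.differentiable one_ne_zero p
  refine ⟨?_, ?_, ?_⟩
  · intro q0 q1 u0 u1
    have h := hRouth q0 q1 u0 0 0 u1
    rw [extd_fd_eval fm fp hfm hfp] at h
    simp at h
    rw [partial1_eq fp q0 q1 (hdp _) u0, partial2_eq fm q0 q1 (hdm _) u1]
    linarith
  · intro q u v q1
    have h := hRouth q q1 u 0 v 0
    rw [extd_fd_eval fm fp hfm hfp] at h
    simp at h
    rw [partial1_eq fm q q1 (hdm _) u, partial1_eq fm q q1 (hdm _) v]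
    linarith
  · intro q u v q0
    have h := hRouth q0 q 0 u 0 v
    rw [extd_fd_eval fm fp hfm hfp] at h
    simp at h
    rw [partial2_eq fp q0 q (hdp _) u, partial2_eq fp q0 q (hdp _) v]
    linarith
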